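/- Let m ≥ 2 be an integer and let λ, γ₁,…,γ_m, βmin, βmax, ε, β̂ be positive reals with βmin ≤ βmax, ε ≤ β̂, γ₁ + γ₂ > Σ_{i=3}^{m} γᵢ, and λ > (γ₁² + γ₁γ₂)·βmax·β̂. Then for all θ ∈ [βmin, βmax] and all θ̂ ∈ [ε, β̂]: |1 − (γ₁² + γ₁γ₂)·θ·θ̂/(λ + γ₁² θ̂²)| + Σ_{i=3}^{m} γ₁γᵢ·θ·θ̂/(λ + γ₁² θ̂²) ≤ 1 − γ₁·(γ₁ + γ₂ − Σ_{i=3}^{m} γᵢ)·βmin·ε/(λ + γ₁² β̂²) < 1. -/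

import Mathlib

/-- First half of Lemma 6 of the paper: the parameter selection condition (19)
implies the contraction condition (27) for the tracking-error recursion. -/
theorem stmt13 (m : ℕ) (hm : 2 ≤ m) (lam βmin βmax ε βh : ℝ) (γ : ℕ → ℝ)
    (hγpos : ∀ i ∈ Finset.Icc 1 m, 0 < γ i)
    (hlam : 0 < lam) (hβmin : 0 < βmin) (hββ : βmin ≤ βmax)
    (hε : 0 < ε) (hεβ : ε ≤ βh)
    (hγ12 : ∑ i ∈ Finset.Icc 3 m, γ i < γ 1 + γ 2)
    (hlam2 : (γ 1 ^ 2 + γ 1 * γ 2) * βmax * βh < lam) :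
    ∀ θ ∈ Set.Icc βmin βmax, ∀ θh ∈ Set.Icc ε βh,
      |1 - (γ 1 ^ 2 + γ 1 * γ 2) * θ * θh / (lam + γ 1 ^ 2 * θh ^ 2)|
          + ∑ i ∈ Finset.Icc 3 m, γ 1 * γ i * θ * θh / (lam + γ 1 ^ 2 * θh ^ 2)
        ≤ 1 - γ 1 * (γ 1 + γ 2 - ∑ i ∈ Finset.Icc 3 m, γ i) * βmin * ε
              / (lam + γ 1 ^ 2 * βh ^ 2) ∧
      1 - γ 1 * (γ 1 + γ 2 - ∑ i ∈ Finset.Icc 3 m, γ i) * βmin * ε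
          / (lam + γ 1 ^ 2 * βh ^ 2) < 1 := by

  intro θ hθ θh hθh
  obtain ⟨hθ1, hθ2⟩ := hθ
  obtain ⟨hh1, hh2⟩ := hθh
  have hγ1 : 0 < γ 1 := hγpos 1 (by simp [Finset.mem_Icc]; omega)
  have hγ2 : 0 < γ 2 := hγpos 2 (by simp [Finset.mem_Icc]; omega)
  set S := ∑ i ∈ Finset.Icc 3 m, γ i with hS
  have hSnn : 0 ≤ S := Finset.sum_nonneg fun i hi => by
    simp only [Finset.mem_Icc] at hi
    exact (hγpos i (by simp [Finset.mem_Icc]; omega)).le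
  have hθpos : 0 < θ := lt_of_lt_of_le hβmin hθ1
  have hhpos : 0 < θh := lt_of_lt_of_le hε hh1
  have hβh : 0 < βh := lt_of_lt_of_le hε hεβ
  have hD : 0 < lam + γ 1 ^ 2 * θh ^ 2 := by positivity
  have hD2 : 0 < lam + γ 1 ^ 2 * βh ^ 2 := by positivity
  have hsq : θh ^ 2 ≤ βh ^ 2 := by nlinarith
  have hDle : lam + γ 1 ^ 2 * θh ^ 2 ≤ lam + γ 1 ^ 2 * βh ^ 2 := by
    nlinarith [mul_le_mul_of_nonneg_left hsq (sq_nonneg (γ 1))]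
  have hθθ : θ * θh ≤ βmax * βh :=
    mul_le_mul hθ2 hh2 hhpos.le (hθpos.trans_le hθ2).le
  have hc : (0:ℝ) < γ 1 ^ 2 + γ 1 * γ 2 := by positivity
  have hAle : (γ 1 ^ 2 + γ 1 * γ 2) * θ * θh ≤ lam := by
    nlinarith [mul_le_mul_of_nonneg_left hθθ hc.le]
  have habs : |1 - (γ 1 ^ 2 + γ 1 * γ 2) * θ * θh / (lam + γ 1 ^ 2 * θh ^ 2)|
      = 1 - (γ 1 ^ 2 + γ 1 * γ 2) * θ * θh / (lam + γ 1 ^ 2 * θh ^ 2) := by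
    rw [abs_of_nonneg]
    have : (γ 1 ^ 2 + γ 1 * γ 2) * θ * θh / (lam + γ 1 ^ 2 * θh ^ 2) ≤ 1 := by
      rw [div_le_one hD]; nlinarith
    linarith
  rw [habs]
  have hsum : ∑ i ∈ Finset.Icc 3 m, γ 1 * γ i * θ * θh / (lam + γ 1 ^ 2 * θh ^ 2)
      = γ 1 * S * θ * θh / (lam + γ 1 ^ 2 * θh ^ 2) := by
    rw [hS, Finset.mul_sum, Finset.sum_mul, Finset.sum_mul, Finset.sum_div]
  rw [hsum]
  have hpos : 0 < γ 1 + γ 2 - S := by linarith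
  have hkey : γ 1 * (γ 1 + γ 2 - S) * βmin * ε / (lam + γ 1 ^ 2 * βh ^ 2)
      ≤ ((γ 1 ^ 2 + γ 1 * γ 2) * θ * θh - γ 1 * S * θ * θh) / (lam + γ 1 ^ 2 * θh ^ 2) := by
    have hbe : βmin * ε ≤ θ * θh := mul_le_mul hθ1 hh1 hε.le hθpos.le
    have hn : 0 ≤ γ 1 * (γ 1 + γ 2 - S) := mul_nonneg hγ1.le hpos.le
    have h1 : γ 1 * (γ 1 + γ 2 - S) * (βmin * ε) ≤ γ 1 * (γ 1 + γ 2 - S) * (θ * θh) :=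
      mul_le_mul_of_nonneg_left hbe hn
    have h0 : 0 ≤ γ 1 * (γ 1 + γ 2 - S) * (θ * θh) :=
      mul_nonneg hn (by positivity)
    exact div_le_div₀ (by linarith) (by linarith) hD hDle
  have hcpos : 0 < γ 1 * (γ 1 + γ 2 - S) * βmin * ε / (lam + γ 1 ^ 2 * βh ^ 2) := by
    exact div_pos (mul_pos (mul_pos (mul_pos hγ1 hpos) hβmin) hε) hD2
  constructor
  · have hexp : ((γ 1 ^ 2 + γ 1 * γ 2) * θ * θh - γ 1 * S * θ * θh) / (lam + γ 1 ^ 2 * θh ^ 2)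
        = (γ 1 ^ 2 + γ 1 * γ 2) * θ * θh / (lam + γ 1 ^ 2 * θh ^ 2)
          - γ 1 * S * θ * θh / (lam + γ 1 ^ 2 * θh ^ 2) := sub_div _ _ _
    linarith [hkey, hexp ▸ hkey]
  · linarith
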